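/- Let {τ_{m,n}}_{(m,n)∈ℤ²} be a solution of the lattice q-UC hierarchy consisting of nowhere-vanishing functions, and define u_{i,m,n} = (T_i(τ_{m+1,n}) τ_{m,n+2}) / (T_i(τ_{m,n+1}) τ_{m+1,n+1}). Then for all i ≠ j in I ∪ J, all (m,n) ∈ ℤ², and every point t with t_i ≠ t_j, the evolution equation holds: T_j(u_{i,m,n}) = u_{i,m,n+1} · (t_i u_{j,m+1,n} − t_j u_{i,m+1,n}) / (t_i u_{j,m,n+1} − t_j u_{i,m,n+1}), the denominator being nonzero at such points. -/

import Mathlib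

/-- The `q`-shift operator on the point `t`: `t_i ↦ q t_i` if `i > 0` (i.e. `i ∈ I`),
`t_i ↦ q⁻¹ t_i` if `i < 0` (i.e. `i ∈ J`), other coordinates unchanged. -/
noncomputable def Tshift (q : ℂ) (i : ℤ) (t : ℤ → ℂ) : ℤ → ℂ :=
  Function.update t i ((if 0 < i then q else q⁻¹) * t i)

/-- A family `τ : ℤ² → ((ℤ → ℂ) → ℂ)` solves the lattice `q`-UC hierarchy. -/
def SolvesLUC (q : ℂ) (I J : Finset ℤ) (τ : ℤ → ℤ → (ℤ → ℂ) → ℂ) : Prop :=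
  ∀ i ∈ I ∪ J, ∀ j ∈ I ∪ J, ∀ m n : ℤ, ∀ t : ℤ → ℂ, (∀ l, t l ≠ 0) →
    t i * τ m (n + 1) (Tshift q i t) * τ (m + 1) n (Tshift q j t)
      - t j * τ m (n + 1) (Tshift q j t) * τ (m + 1) n (Tshift q i t)
      = (t i - t j) * τ m n (Tshift q i (Tshift q j t)) * τ (m + 1) (n + 1) t

/-- `u_{i,m,n} = (T_i(τ_{m+1,n}) τ_{m,n+2}) / (T_i(τ_{m,n+1}) τ_{m+1,n+1})`. -/
noncomputable def uOf (q : ℂ) (τ : ℤ → ℤ → (ℤ → ℂ) → ℂ) (i m n : ℤ) (t : ℤ → ℂ) : ℂ :=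
  τ (m + 1) n (Tshift q i t) * τ m (n + 2) t
    / (τ m (n + 1) (Tshift q i t) * τ (m + 1) (n + 1) t)

/-- Proposition 2.4: for a nowhere-vanishing solution `{τ_{m,n}}` of the
lattice `q`-UC hierarchy and `u_{i,m,n}` as above, at every point `t` with `t_i ≠ t_j`
the denominator `t_i u_{j,m,n+1} − t_j u_{i,m,n+1}` is nonzero and the evolution equation
`T_j(u_{i,m,n}) = u_{i,m,n+1} (t_i u_{j,m+1,n} − t_j u_{i,m+1,n})
/ (t_i u_{j,m,n+1} − t_j u_{i,m,n+1})` holds. -/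

lemma Tshift_ne_zero (q : ℂ) (hq : q ≠ 0) (i : ℤ) (t : ℤ → ℂ) (ht : ∀ l, t l ≠ 0) :
    ∀ l, Tshift q i t l ≠ 0 := by
  intro l
  unfold Tshift
  rcases eq_or_ne l i with rfl | h
  · rw [Function.update_self]
    exact mul_ne_zero (by split <;> simp [hq]) (ht l)
  · rw [Function.update_of_ne h]; exact ht l

theorem LUC_u_evolution
    (q : ℂ) (hq : q ≠ 0) (I J : Finset ℤ) (hI : ∀ i ∈ I, 0 < i) (hJ : ∀ j ∈ J, j < 0)
    (τ : ℤ → ℤ → (ℤ → ℂ) → ℂ)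
    (hτ0 : ∀ m n : ℤ, ∀ t : ℤ → ℂ, (∀ l, t l ≠ 0) → τ m n t ≠ 0)
    (hτ : SolvesLUC q I J τ)
    (i j : ℤ) (hi : i ∈ I ∪ J) (hj : j ∈ I ∪ J) (hij : i ≠ j)
    (m n : ℤ) (t : ℤ → ℂ) (ht : ∀ l, t l ≠ 0) (htij : t i ≠ t j) :
    t i * uOf q τ j m (n + 1) t - t j * uOf q τ i m (n + 1) t ≠ 0 ∧
    uOf q τ i m n (Tshift q j t)
      = uOf q τ i m (n + 1) t
        * (t i * uOf q τ j (m + 1) n t - t j * uOf q τ i (m + 1) n t)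
        / (t i * uOf q τ j m (n + 1) t - t j * uOf q τ i m (n + 1) t) := by
  have hti := Tshift_ne_zero q hq i t ht
  have htj := Tshift_ne_zero q hq j t ht
  have htij2 := Tshift_ne_zero q hq i _ htj
  have htd : t i - t j ≠ 0 := sub_ne_zero.mpr htij
  have H1 := hτ i hi j hj m (n+1) t ht
  have H2 := hτ i hi j hj (m+1) n t ht
  have e1 : (n:ℤ)+1+1 = n+2 := by ring
  have e2 : (n:ℤ)+1+2 = n+3 := by ring
  have e3 : (m:ℤ)+1+1 = m+2 := by ring
  rw [e1] at H1
  rw [e3] at H2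
  have n1 : τ m (n+2) (Tshift q i t) ≠ 0 := hτ0 _ _ _ hti
  have n2 : τ m (n+2) (Tshift q j t) ≠ 0 := hτ0 _ _ _ htj
  have n3 : τ (m+1) (n+2) t ≠ 0 := hτ0 _ _ _ ht
  have n4 : τ (m+1) (n+1) (Tshift q i t) ≠ 0 := hτ0 _ _ _ hti
  have n5 : τ (m+1) (n+1) (Tshift q j t) ≠ 0 := hτ0 _ _ _ htj
  have n6 : τ (m+2) (n+1) t ≠ 0 := hτ0 _ _ _ ht
  have n7 : τ m (n+1) (Tshift q i (Tshift q j t)) ≠ 0 := hτ0 _ _ _ htij2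
  have n8 : τ (m+1) n (Tshift q i (Tshift q j t)) ≠ 0 := hτ0 _ _ _ htij2
  have n9 : τ m (n+3) t ≠ 0 := hτ0 _ _ _ ht
  have nA : τ m (n+2) t ≠ 0 := hτ0 _ _ _ ht
  have nB : τ (m+1) (n+1) t ≠ 0 := hτ0 _ _ _ ht
  have hden : t i * uOf q τ j m (n + 1) t - t j * uOf q τ i m (n + 1) t
      = (t i - t j) * τ m (n+1) (Tshift q i (Tshift q j t)) * τ m (n+3) t
        / (τ m (n+2) (Tshift q i t) * τ m (n+2) (Tshift q j t)) := by
    simp only [uOf, e1, e2]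
    field_simp
    linear_combination H1
  have hnum : t i * uOf q τ j (m + 1) n t - t j * uOf q τ i (m + 1) n t
      = (t i - t j) * τ (m+1) n (Tshift q i (Tshift q j t)) * τ (m+1) (n+2) t
        / (τ (m+1) (n+1) (Tshift q i t) * τ (m+1) (n+1) (Tshift q j t)) := by
    simp only [uOf, e1, e3]
    field_simp
    linear_combination H2
  have hD : (t i - t j) * τ m (n+1) (Tshift q i (Tshift q j t)) * τ m (n+3) t
        / (τ m (n+2) (Tshift q i t) * τ m (n+2) (Tshift q j t)) ≠ 0 :=
    div_ne_zero (mul_ne_zero (mul_ne_zero htd n7) n9) (mul_ne_zero n1 n2)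
  constructor
  · rw [hden]; exact hD
  · rw [hden, hnum]
    simp only [uOf, e1, e2]
    field_simp
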